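/- Let dA, dB ≥ 2 and suppose { (a^{(r)}_i ⊗ b^{(r)}_j) : r = 1,…,k } is a family of k pairwise mutually unbiased product bases of EuclideanSpace ℂ (Fin dA × Fin dB). Then the k local bases (a^{(r)}_i), r = 1,…,k, are pairwise mutually unbiased orthonormal bases of ℂ^{dA} (and likewise the (b^{(r)}_j) are pairwise mutually unbiased in ℂ^{dB}). Consequently the number of pairwise mutually unbiased product bases is at most the minimum of the maximal numbers of MUBs in dimensions dA and dB. -/

import Mathlib

/-- The product vector `(u ⊗ v)(a,b) = u(a)·v(b)`. -/
noncomputable def tens {dA dB : ℕ} (u : EuclideanSpace ℂ (Fin dA))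
    (v : EuclideanSpace ℂ (Fin dB)) : EuclideanSpace ℂ (Fin dA × Fin dB) :=
  WithLp.toLp 2 (fun ab : Fin dA × Fin dB => u ab.1 * v ab.2)

/-- Two orthonormal bases of `ℂ^d` are mutually unbiased. -/
def IsMUBPair {d : ℕ} (e f : OrthonormalBasis (Fin d) ℂ (EuclideanSpace ℂ (Fin d))) : Prop :=
  ∀ i j : Fin d, ‖(inner ℂ (e i) (f j) : ℂ)‖ ^ 2 = 1 / (d : ℝ)

/-- The maximal number of pairwise mutually unbiased bases in dimension `d`. -/
noncomputable def maxMUBs (d : ℕ) : ℕ :=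
  sSup {k : ℕ | ∃ f : Fin k → OrthonormalBasis (Fin d) ℂ (EuclideanSpace ℂ (Fin d)),
    ∀ r s : Fin k, r ≠ s → IsMUBPair (f r) (f s)}


lemma inner_tens {dA dB : ℕ} (u u' : EuclideanSpace ℂ (Fin dA))
    (v v' : EuclideanSpace ℂ (Fin dB)) :
    (inner ℂ (tens u v) (tens u' v') : ℂ) = (inner ℂ u u' : ℂ) * (inner ℂ v v' : ℂ) := by
  simp only [tens, PiLp.inner_apply, PiLp.toLp_apply, RCLike.inner_apply, Finset.sum_mul_sum,
    Fintype.sum_prod_type, map_mul]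
  apply Finset.sum_congr rfl; intro i _
  apply Finset.sum_congr rfl; intro j _
  ring

lemma sum_abs_sq_inner {d : ℕ} (f : OrthonormalBasis (Fin d) ℂ (EuclideanSpace ℂ (Fin d)))
    (x : EuclideanSpace ℂ (Fin d)) (hx : ‖x‖ = 1) :
    ∑ j, (‖(inner ℂ x (f j) : ℂ)‖) ^ 2 = 1 := by
  have h := f.sum_inner_mul_inner x x
  have h2 : ∀ j, (inner ℂ x (f j) : ℂ) * (inner ℂ (f j) x : ℂ)
      = ((‖(inner ℂ x (f j) : ℂ)‖) ^ 2 : ℝ) := by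
    intro j
    rw [← inner_conj_symm x (f j), Complex.sq_norm, Complex.normSq_conj,
      Complex.normSq_eq_conj_mul_self]
  simp only [h2] at h
  rw [← Complex.ofReal_sum] at h
  have hxx : (inner ℂ x x : ℂ) = 1 := by
    rw [inner_self_eq_norm_sq_to_K, hx]; norm_num
  rw [hxx] at h
  exact_mod_cast h

noncomputable def outer {d : ℕ} (u : EuclideanSpace ℂ (Fin d)) :
    EuclideanSpace ℂ (Fin d × Fin d) :=
  tens u (WithLp.toLp 2 (fun j => (starRingEnd ℂ) (u j)))

lemma inner_outer {d : ℕ} (u v : EuclideanSpace ℂ (Fin d)) :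
    (inner ℂ (outer u) (outer v) : ℂ) = ((‖(inner ℂ u v : ℂ)‖) ^ 2 : ℝ) := by
  rw [outer, outer, inner_tens]
  set cu : EuclideanSpace ℂ (Fin d) := WithLp.toLp 2 (fun j => (starRingEnd ℂ) (u j)) with hcu
  set cv : EuclideanSpace ℂ (Fin d) := WithLp.toLp 2 (fun j => (starRingEnd ℂ) (v j)) with hcv
  have : (inner ℂ cu cv : ℂ) = (starRingEnd ℂ) (inner ℂ u v : ℂ) := by
    simp only [PiLp.inner_apply, RCLike.inner_apply, PiLp.toLp_apply, hcu, hcv, map_sum, map_mul,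
      Complex.conj_conj]
  rw [this, Complex.mul_conj, ← Complex.sq_norm]

lemma mub_card_le {d k : ℕ} (hd : 2 ≤ d)
    (f : Fin k → OrthonormalBasis (Fin d) ℂ (EuclideanSpace ℂ (Fin d)))
    (h : ∀ r s : Fin k, r ≠ s → IsMUBPair (f r) (f s)) : k ≤ d * d := by
  set i0 : Fin d := ⟨0, by omega⟩
  set i1 : Fin d := ⟨1, by omega⟩
  have hne : i0 ≠ i1 := by simp [i0, i1, Fin.ext_iff]
  set G : Fin k → EuclideanSpace ℂ (Fin d × Fin d) :=
    fun r => outer (f r i0) - outer (f r i1) with hG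
  have hGG : ∀ r, (inner ℂ (G r) (G r) : ℂ) = 2 := by
    intro r
    simp only [hG, inner_sub_left, inner_sub_right, inner_outer]
    rw [orthonormal_iff_ite.mp (f r).orthonormal i0 i0,
      orthonormal_iff_ite.mp (f r).orthonormal i0 i1,
      orthonormal_iff_ite.mp (f r).orthonormal i1 i0,
      orthonormal_iff_ite.mp (f r).orthonormal i1 i1]
    simp [hne, hne.symm]
    norm_num
  have hGrs : ∀ r s, r ≠ s → (inner ℂ (G r) (G s) : ℂ) = 0 := by
    intro r s hrs
    simp only [hG, inner_sub_left, inner_sub_right, inner_outer]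
    rw [h r s hrs i0 i0, h r s hrs i0 i1, h r s hrs i1 i0, h r s hrs i1 i1]
    ring
  have hG0 : ∀ r, G r ≠ 0 := by
    intro r h0
    have := hGG r
    rw [h0, inner_zero_left] at this
    norm_num at this
  set H : Fin k → EuclideanSpace ℂ (Fin d × Fin d) :=
    fun r => (‖G r‖ : ℂ)⁻¹ • G r with hH
  have ho : Orthonormal ℂ H := by
    constructor
    · intro r
      exact norm_smul_inv_norm (hG0 r)
    · intro r s hrs
      simp only [hH, inner_smul_left, inner_smul_right, hGrs r s hrs, mul_zero]
  have := ho.linearIndependent.fintype_card_le_finrank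
  simpa [finrank_euclideanSpace] using this

lemma le_maxMUBs {d k : ℕ} (hd : 2 ≤ d)
    (f : Fin k → OrthonormalBasis (Fin d) ℂ (EuclideanSpace ℂ (Fin d)))
    (h : ∀ r s : Fin k, r ≠ s → IsMUBPair (f r) (f s)) : k ≤ maxMUBs d :=
  le_csSup ⟨d * d, fun m hm => by obtain ⟨g, hg⟩ := hm; exact mub_card_le hd g hg⟩ ⟨f, h⟩

/-- If `k` product bases of `ℂ^{dA} ⊗ ℂ^{dB}` are pairwise mutually unbiased, then their
local factors form pairwise mutually unbiased bases of `ℂ^{dA}` (resp. `ℂ^{dB}`); hence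
the number of pairwise mutually unbiased product bases is at most the minimum of the
maximal numbers of MUBs in dimensions `dA` and `dB`. -/
theorem product_mub_local_mub (dA dB : ℕ) (hA : 2 ≤ dA) (hB : 2 ≤ dB) (k : ℕ)
    (a : Fin k → OrthonormalBasis (Fin dA) ℂ (EuclideanSpace ℂ (Fin dA)))
    (b : Fin k → OrthonormalBasis (Fin dB) ℂ (EuclideanSpace ℂ (Fin dB)))
    (hmub : ∀ r s : Fin k, r ≠ s →
      ∀ (i i' : Fin dA) (j j' : Fin dB),
        ‖(inner ℂ (tens (a r i) (b r j)) (tens (a s i') (b s j')) : ℂ)‖ ^ 2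
          = 1 / (dA * dB : ℝ)) :
    (∀ r s : Fin k, r ≠ s → IsMUBPair (a r) (a s)) ∧
    (∀ r s : Fin k, r ≠ s → IsMUBPair (b r) (b s)) ∧
    k ≤ min (maxMUBs dA) (maxMUBs dB) := by
  have hdA : (dA : ℝ) ≠ 0 := by positivity
  have hdB : (dB : ℝ) ≠ 0 := by positivity
  have key : ∀ r s : Fin k, r ≠ s → ∀ (i i' : Fin dA) (j j' : Fin dB),
      (‖(inner ℂ (a r i) (a s i') : ℂ)‖) ^ 2 *
        (‖(inner ℂ (b r j) (b s j') : ℂ)‖) ^ 2 = 1 / (dA * dB : ℝ) := by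
    intro r s hrs i i' j j'
    have := hmub r s hrs i i' j j'
    rwa [inner_tens, norm_mul, mul_pow] at this
  have ha' : ∀ r s : Fin k, r ≠ s → IsMUBPair (a r) (a s) := by
    intro r s hrs i i'
    set j0 : Fin dB := ⟨0, by omega⟩
    have hsum : ∑ j', (‖(inner ℂ (b r j0) (b s j') : ℂ)‖) ^ 2 = 1 :=
      sum_abs_sq_inner (b s) (b r j0) ((b r).orthonormal.1 j0)
    have : (‖(inner ℂ (a r i) (a s i') : ℂ)‖) ^ 2 *
        (∑ j', (‖(inner ℂ (b r j0) (b s j') : ℂ)‖) ^ 2)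
        = ∑ j' : Fin dB, (1 / (dA * dB : ℝ)) := by
      rw [Finset.mul_sum]
      exact Finset.sum_congr rfl fun j' _ => key r s hrs i i' j0 j'
    rw [hsum, mul_one] at this
    rw [this, Finset.sum_const, Finset.card_univ, Fintype.card_fin, nsmul_eq_mul]
    field_simp
  have hb' : ∀ r s : Fin k, r ≠ s → IsMUBPair (b r) (b s) := by
    intro r s hrs j j'
    set i0 : Fin dA := ⟨0, by omega⟩
    have hsum : ∑ i', (‖(inner ℂ (a r i0) (a s i') : ℂ)‖) ^ 2 = 1 :=
      sum_abs_sq_inner (a s) (a r i0) ((a r).orthonormal.1 i0)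
    have : (‖(inner ℂ (b r j) (b s j') : ℂ)‖) ^ 2 *
        (∑ i', (‖(inner ℂ (a r i0) (a s i') : ℂ)‖) ^ 2)
        = ∑ i' : Fin dA, (1 / (dA * dB : ℝ)) := by
      rw [Finset.mul_sum]
      refine Finset.sum_congr rfl fun i' _ => ?_
      rw [mul_comm]
      exact key r s hrs i0 i' j j'
    rw [hsum, mul_one] at this
    rw [this, Finset.sum_const, Finset.card_univ, Fintype.card_fin, nsmul_eq_mul]
    field_simp
  exact ⟨ha', hb', le_min (le_maxMUBs hA a ha') (le_maxMUBs hB b hb')⟩
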